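/- PSL₂(ℤ) is isomorphic to the free product C₂ * C₃ of a cyclic group of order 2 and a cyclic group of order 3. -/

import Mathlib

/-- The modular group PSL₂(ℤ) = SL₂(ℤ)/center. -/
abbrev PSL2Z := Matrix.SpecialLinearGroup (Fin 2) ℤ ⧸
  Subgroup.center (Matrix.SpecialLinearGroup (Fin 2) ℤ)

/-- class of an SL₂(ℤ) matrix in PSL₂(ℤ) -/
abbrev psl (A : Matrix.SpecialLinearGroup (Fin 2) ℤ) : PSL2Z := QuotientGroup.mk A


open Matrix ModularGroup MatrixGroups UpperHalfPlane

theorem S_sq : S * S = -1 := by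
  ext i j
  fin_cases i <;> fin_cases j <;>
    simp [coe_S, Matrix.mul_apply, Fin.sum_univ_two]

theorem closure_S_T : Subgroup.closure ({S, T} : Set SL(2,ℤ)) = ⊤ := by
  rw [eq_top_iff]
  intro A _
  set C := Subgroup.closure ({S, T} : Set SL(2,ℤ)) with hC
  have hS : S ∈ C := Subgroup.subset_closure (by simp)
  have hT : T ∈ C := Subgroup.subset_closure (by simp)
  have key : ∀ n : ℕ, ∀ A : SL(2,ℤ), (A.1 1 0).natAbs = n → A ∈ C := by
    intro n
    induction n using Nat.strong_induction_on with
    | _ n ih =>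
      intro A hA
      rcases eq_or_ne (A.1 1 0) 0 with hc | hc
      · -- c = 0
        have hdet := A.2
        rw [Matrix.det_fin_two, hc] at hdet
        simp only [mul_zero, sub_zero] at hdet
        rcases Int.mul_eq_one_iff_eq_one_or_neg_one.mp hdet with ⟨h1, h2⟩ | ⟨h1, h2⟩
        · have : A = T ^ (A.1 0 1) := by
            ext i j
            fin_cases i <;> fin_cases j <;> simp [coe_T_zpow, h1, h2, hc]
          rw [this]; exact zpow_mem hT _
        · have : A = S * S * T ^ (-(A.1 0 1)) := by
            have : S * S * T ^ (-(A.1 0 1)) = -T ^ (-(A.1 0 1)) := by rw [S_sq, neg_one_mul]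
            rw [this]
            ext i j
            fin_cases i <;> fin_cases j <;>
              simp [coe_T_zpow, h1, h2, hc]
          rw [this]
          exact mul_mem (mul_mem hS hS) (zpow_mem hT _)
      · -- c ≠ 0
        set a := A.1 0 0 with ha
        set c := A.1 1 0 with hcc
        set q := a / c with hq
        set B := S * T ^ (-q) * A with hB
        have hB10 : B.1 1 0 = a % c := by
          rw [Int.emod_def]
          simp [hB, coe_S, coe_T_zpow, Matrix.mul_apply, Fin.sum_univ_two]
          ring
        have hlt : (B.1 1 0).natAbs < n := by
          rw [hB10, ← hA]
          have h1 : 0 ≤ a % c := Int.emod_nonneg a hc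
          have h2 : a % c < |c| := by rw [Int.abs_eq_natAbs]; exact Int.emod_lt a hc
          rw [Int.abs_eq_natAbs] at h2
          omega
        have hBC : B ∈ C := ih _ hlt B rfl
        have : A = T ^ q * S⁻¹ * B := by
          rw [hB]; group
        rw [this]
        exact mul_mem (mul_mem (zpow_mem hT _) (inv_mem hS)) hBC
  exact key _ A rfl



theorem mem_center_iff' {A : SL(2,ℤ)} :
    A ∈ Subgroup.center SL(2,ℤ) ↔ A = 1 ∨ A = -1 := by
  rw [Matrix.SpecialLinearGroup.mem_center_iff]
  constructor
  · rintro ⟨r, hr, hA⟩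
    have : r = 1 ∨ r = -1 := by
      have : r ^ 2 = 1 := by simpa using hr
      have h2 : r * r = 1 := by simpa [sq] using this
      rcases Int.eq_one_or_neg_one_of_mul_eq_one' h2 with ⟨h,-⟩|⟨h,-⟩ <;> [left;right] <;> exact h
    rcases this with rfl | rfl
    · left; ext i j; rw [← hA]; simp
    · right; ext i j
      rw [← hA]
      simp [Matrix.scalar_apply, Matrix.neg_apply, Matrix.one_apply, Matrix.diagonal_apply]
  · rintro (rfl | rfl)
    · exact ⟨1, by norm_num, by simp⟩
    · refine ⟨-1, by norm_num, ?_⟩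
      ext i j
      simp [Matrix.scalar_apply, Matrix.neg_apply, Matrix.one_apply, Matrix.diagonal_apply]

/-- the action hom of SL(2,ℤ) on ℍ -/
noncomputable def rho : SL(2,ℤ) →* Equiv.Perm ℍ := MulAction.toPermHom SL(2,ℤ) ℍ

theorem center_le_ker : Subgroup.center SL(2,ℤ) ≤ rho.ker := by
  intro A hA
  rcases mem_center_iff'.mp hA with rfl | rfl
  · exact map_one rho
  · rw [MonoidHom.mem_ker]
    refine Equiv.ext fun z => ?_
    have h := SL_neg_smul (1 : SL(2,ℤ)) z
    rw [one_smul] at h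
    simp only [rho, MulAction.toPermHom_apply, MulAction.toPerm_apply, Equiv.Perm.coe_one, id]
    exact h

/-- The action hom of PSL₂(ℤ) on ℍ -/
noncomputable def rhoBar : PSL2Z →* Equiv.Perm ℍ :=
  QuotientGroup.lift _ rho center_le_ker

noncomputable instance : MulAction PSL2Z ℍ := MulAction.compHom ℍ rhoBar

theorem psl_smul (A : SL(2,ℤ)) (z : ℍ) : (psl A) • z = A • z := rfl


lemma coe_S_smul (z : ℍ) : ((S • z : ℍ) : ℂ) = -(z : ℂ)⁻¹ := by
  rw [specialLinearGroup_apply]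
  simp [coe_S]
  rw [div_eq_iff (ne_zero z), neg_mul, inv_mul_cancel₀ (ne_zero z)]

lemma coe_ST_smul (z : ℍ) : (((S * T) • z : ℍ) : ℂ) = -((z : ℂ) + 1)⁻¹ := by
  have hz : (z : ℂ) + 1 ≠ 0 := by
    intro h
    have := congrArg Complex.im h
    simp at this
    have h2 : z.im = 0 := by simpa using this
    exact absurd h2 (ne_of_gt z.im_pos)
  rw [specialLinearGroup_apply]
  have hST : (S * T : SL(2,ℤ)).1 = !![0, -1; 1, 1] := by
    ext i j
    fin_cases i <;> fin_cases j <;>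
      simp [coe_S, coe_T, Matrix.mul_apply, Fin.sum_univ_two]
  simp [hST]
  rw [div_eq_iff hz, neg_mul, inv_mul_cancel₀ hz]

lemma coe_ST_sq_smul (z : ℍ) : (((S * T) ^ 2 • z : ℍ) : ℂ) = -1 - (z : ℂ)⁻¹ := by
  rw [specialLinearGroup_apply]
  have hST : ((S * T) ^ 2 : SL(2,ℤ)).1 = !![-1, -1; 1, 0] := by
    ext i j
    fin_cases i <;> fin_cases j <;>
      simp [coe_S, coe_T, pow_two, Matrix.mul_apply, Fin.sum_univ_two]
  simp [hST]
  field_simp [ne_zero z]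
  ring

lemma S_smul_re {z : ℍ} (h : z.re < 0) : 0 < (S • z).re := by
  have h1 : (S • z).re = -((z:ℂ).re / Complex.normSq z) := by
    rw [← UpperHalfPlane.coe_re, coe_S_smul]
    simp [Complex.inv_re]
  rw [h1, UpperHalfPlane.coe_re]
  have hn : 0 < Complex.normSq z := Complex.normSq_pos.mpr (ne_zero z)
  have := div_neg_of_neg_of_pos h hn
  linarith

lemma ST_smul_re {z : ℍ} (h : 0 < z.re) : ((S * T) • z).re < 0 := by
  have hz1 : ((z : ℂ) + 1).im ≠ 0 := by simp; exact ne_of_gt z.im_pos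
  have hz : (z : ℂ) + 1 ≠ 0 := fun hh => hz1 (by rw [hh]; simp)
  have h1 : ((S * T) • z).re = -(((z:ℂ) + 1).re / Complex.normSq ((z:ℂ)+1)) := by
    rw [← UpperHalfPlane.coe_re, coe_ST_smul]
    simp [Complex.inv_re]
  rw [h1]
  have hn : 0 < Complex.normSq ((z:ℂ)+1) := Complex.normSq_pos.mpr hz
  have hre : 0 < ((z:ℂ) + 1).re := by
    simp only [Complex.add_re, Complex.one_re, UpperHalfPlane.coe_re]
    linarith
  have := div_pos hre hn
  linarith

lemma ST_sq_smul_re {z : ℍ} (h : 0 < z.re) : ((S * T) ^ 2 • z).re < 0 := by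
  have h1 : ((S * T) ^ 2 • z).re = -1 - (z:ℂ).re / Complex.normSq z := by
    rw [← UpperHalfPlane.coe_re, coe_ST_sq_smul]
    simp [Complex.inv_re, sub_eq_add_neg]
  rw [h1]
  have hn : 0 < Complex.normSq z := Complex.normSq_pos.mpr (ne_zero z)
  have hre : 0 < ((z : ℂ)).re := by rw [UpperHalfPlane.coe_re]; exact h
  have := div_pos hre hn
  linarith


/-- hom from ZMod n into a group, sending 1 to an element of order dividing n -/
noncomputable def cycHom {G : Type*} [Group G] (n : ℕ) (x : G) (hx : x ^ (n : ℤ) = 1) :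
    Multiplicative (ZMod n) →* G :=
  AddMonoidHom.toMultiplicativeLeft
    (ZMod.lift n ⟨zmultiplesHom (Additive G) (Additive.ofMul x), by
      simp [zmultiplesHom]; exact congrArg Additive.ofMul (show x ^ n = 1 by simpa using hx)⟩)

theorem cycHom_intCast {G : Type*} [Group G] (n : ℕ) (x : G) (hx : x ^ (n : ℤ) = 1) (m : ℤ) :
    cycHom n x hx (Multiplicative.ofAdd ((m : ZMod n))) = x ^ m := by
  simp [cycHom, ZMod.lift_coe]

theorem psl_S_sq : (psl S) ^ ((2:ℕ) : ℤ) = 1 := by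
  rw [zpow_natCast, sq]
  have h : psl S * psl S = psl (S * S) := rfl
  rw [h, S_sq, QuotientGroup.eq_one_iff]
  exact mem_center_iff'.mpr (Or.inr rfl)

theorem ST_cube : (S * T) * ((S * T) * (S * T)) = -1 := by
  ext i j
  fin_cases i <;> fin_cases j <;>
    simp [coe_S, coe_T, Matrix.mul_apply, Fin.sum_univ_two]

theorem psl_ST_cube : (psl (S * T)) ^ ((3:ℕ) : ℤ) = 1 := by
  rw [zpow_natCast, pow_succ, pow_succ, pow_one]
  have h : psl (S*T) * psl (S*T) * psl (S*T) = psl ((S*T) * ((S*T) * (S*T))) := by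
    show QuotientGroup.mk _ = QuotientGroup.mk _
    congr 1
    group
  rw [h, ST_cube, QuotientGroup.eq_one_iff]
  exact mem_center_iff'.mpr (Or.inr rfl)

noncomputable def f2 : Multiplicative (ZMod 2) →* PSL2Z := cycHom 2 (psl S) psl_S_sq
noncomputable def f3 : Multiplicative (ZMod 3) →* PSL2Z := cycHom 3 (psl (S * T)) psl_ST_cube

abbrev HB : Bool → Type := fun b => cond b (Multiplicative (ZMod 2)) (Multiplicative (ZMod 3))
instance : ∀ b, Group (HB b)
  | true => inferInstanceAs (Group (Multiplicative (ZMod 2)))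
  | false => inferInstanceAs (Group (Multiplicative (ZMod 3)))

noncomputable def fam : ∀ b : Bool, HB b →* PSL2Z := fun b =>
  Bool.rec (motive := fun b => HB b →* PSL2Z) f3 f2 b

noncomputable def L : Monoid.CoprodI HB →* PSL2Z := Monoid.CoprodI.lift fam

noncomputable def XX : Bool → Set ℍ := fun b => cond b {z | 0 < z.re} {z | z.re < 0}

theorem val2 : ∀ h : Multiplicative (ZMod 2), h ≠ 1 → f2 h = psl S := by
  intro h hne
  have h2 : h = Multiplicative.ofAdd (((1:ℤ) : ZMod 2)) := by revert hne; revert h; decide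
  subst h2
  have := cycHom_intCast 2 (psl S) psl_S_sq 1
  rwa [zpow_one] at this

theorem val3 : ∀ h : Multiplicative (ZMod 3), h ≠ 1 →
    f3 h = psl (S * T) ∨ f3 h = psl ((S * T) * (S * T)) := by
  intro h hne
  have h3 : h = Multiplicative.ofAdd (((1:ℤ) : ZMod 3)) ∨
      h = Multiplicative.ofAdd (((2:ℤ) : ZMod 3)) := by revert hne; revert h; decide
  rcases h3 with rfl | rfl
  · left
    have := cycHom_intCast 3 (psl (S * T)) psl_ST_cube 1
    rwa [zpow_one] at this
  · right
    have := cycHom_intCast 3 (psl (S * T)) psl_ST_cube 2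
    rw [zpow_two] at this
    exact this

theorem ST_sq_smul_re' {z : ℍ} (h : 0 < z.re) : (((S * T) * (S * T)) • z).re < 0 := by
  have : (S * T) * (S * T) = (S * T) ^ 2 := (sq _).symm
  rw [this]
  exact ST_sq_smul_re h

theorem L_injective : Function.Injective L := by
  apply Monoid.CoprodI.lift_injective_of_ping_pong fam ?_ XX ?_ ?_ ?_
  · right
    refine ⟨false, ?_⟩
    show (3:Cardinal) ≤ Cardinal.mk (Multiplicative (ZMod 3))
    rw [Cardinal.mk_fintype]
    norm_num
  · intro b
    cases b
    · exact ⟨⟨⟨-1, 1⟩, by norm_num⟩, by show (-1:ℝ) < 0; norm_num⟩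
    · exact ⟨⟨⟨1, 1⟩, by norm_num⟩, by show (0:ℝ) < 1; norm_num⟩
  · intro i j hij
    have key : Disjoint (XX true) (XX false) := by
      rw [Set.disjoint_left]
      intro z hz1 hz2
      have h1 : 0 < z.re := hz1
      have h2 : z.re < 0 := hz2
      linarith
    cases i <;> cases j <;> simp at hij ⊢
    · exact key.symm
    · exact key
  · intro i j hij
    cases i <;> cases j <;> try exact absurd rfl hij
    · -- i = false (C3), j = true
      intro h hne w hw
      rw [Set.mem_smul_set] at hw
      obtain ⟨z, hz, rfl⟩ := hw
      have hz' : 0 < z.re := hz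
      show ((fam false h) • z).re < 0
      rcases val3 h hne with hv | hv
      · have : fam false h = psl (S * T) := hv
        rw [this, psl_smul]
        exact ST_smul_re hz'
      · have : fam false h = psl ((S * T) * (S * T)) := hv
        rw [this, psl_smul]
        exact ST_sq_smul_re' hz'
    · -- i = true (C2), j = false
      intro h hne w hw
      rw [Set.mem_smul_set] at hw
      obtain ⟨z, hz, rfl⟩ := hw
      have hz' : z.re < 0 := hz
      show 0 < ((fam true h) • z).re
      have : fam true h = psl S := val2 h hne
      rw [this, psl_smul]
      exact S_smul_re hz'

theorem L_of_true : L (Monoid.CoprodI.of (i := true) (Multiplicative.ofAdd (((1:ℤ) : ZMod 2)))) = psl S := by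
  rw [L]
  exact (Monoid.CoprodI.lift_of (fi := fam) _).trans (val2 _ (by decide : Multiplicative.ofAdd (((1:ℤ) : ZMod 2)) ≠ 1))

theorem L_of_false : L (Monoid.CoprodI.of (i := false) (Multiplicative.ofAdd (((1:ℤ) : ZMod 3)))) = psl (S * T) := by
  rw [L]
  refine (Monoid.CoprodI.lift_of (fi := fam) _).trans ?_
  have := cycHom_intCast 3 (psl (S * T)) psl_ST_cube 1
  rwa [zpow_one] at this

theorem L_surjective : Function.Surjective L := by
  rw [← MonoidHom.range_eq_top, eq_top_iff]
  intro x hx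
  clear hx
  obtain ⟨A, rfl⟩ := QuotientGroup.mk'_surjective (Subgroup.center SL(2,ℤ)) x
  have hA : A ∈ Subgroup.closure ({S, T} : Set SL(2,ℤ)) := by rw [closure_S_T]; trivial
  have hS : psl S ∈ L.range := ⟨_, L_of_true⟩
  have hST : psl (S * T) ∈ L.range := ⟨_, L_of_false⟩
  have hT : psl T ∈ L.range := by
    have h1 : psl T = (psl S)⁻¹ * psl (S * T) := by
      show QuotientGroup.mk _ = QuotientGroup.mk _ * QuotientGroup.mk _
      rw [← QuotientGroup.mk_mul]
      congr 1
      group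
    rw [h1]
    exact mul_mem (inv_mem hS) hST
  induction hA using Subgroup.closure_induction with
  | mem g hg =>
    rcases hg with rfl | rfl
    · exact hS
    · exact hT
  | one => exact one_mem _
  | mul g₁ g₂ _ _ h1 h2 =>
    have : (QuotientGroup.mk' _ : SL(2,ℤ) →* PSL2Z) (g₁ * g₂)
        = QuotientGroup.mk' _ g₁ * QuotientGroup.mk' _ g₂ := map_mul _ _ _
    rw [this]
    exact mul_mem h1 h2
  | inv g _ h =>
    have : (QuotientGroup.mk' _ : SL(2,ℤ) →* PSL2Z) g⁻¹ = ((QuotientGroup.mk' _ : SL(2,ℤ) →* PSL2Z) g)⁻¹ := map_inv _ _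
    rw [this]
    exact inv_mem h

noncomputable def ofTrue : Multiplicative (ZMod 2) →* Monoid.CoprodI HB :=
  Monoid.CoprodI.of (M := HB) (i := true)
noncomputable def ofFalse : Multiplicative (ZMod 3) →* Monoid.CoprodI HB :=
  Monoid.CoprodI.of (M := HB) (i := false)

noncomputable def cFwd : Monoid.Coprod (Multiplicative (ZMod 2)) (Multiplicative (ZMod 3)) →* Monoid.CoprodI HB :=
  Monoid.Coprod.lift ofTrue ofFalse

noncomputable def cBwd : Monoid.CoprodI HB →* Monoid.Coprod (Multiplicative (ZMod 2)) (Multiplicative (ZMod 3)) :=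
  Monoid.CoprodI.lift (fun b => Bool.rec
    (motive := fun b => HB b →* Monoid.Coprod (Multiplicative (ZMod 2)) (Multiplicative (ZMod 3)))
    Monoid.Coprod.inr Monoid.Coprod.inl b)

noncomputable def cEquiv : Monoid.Coprod (Multiplicative (ZMod 2)) (Multiplicative (ZMod 3)) ≃* Monoid.CoprodI HB :=
  MonoidHom.toMulEquiv cFwd cBwd
    (by
      apply Monoid.Coprod.hom_ext
      · refine MonoidHom.ext fun x => ?_
        show cBwd (cFwd (Monoid.Coprod.inl x)) = Monoid.Coprod.inl x
        rw [cFwd, Monoid.Coprod.lift_apply_inl]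
        show cBwd (Monoid.CoprodI.of (M := HB) (i := true) x) = _
        rw [cBwd, Monoid.CoprodI.lift_of]
      · refine MonoidHom.ext fun x => ?_
        show cBwd (cFwd (Monoid.Coprod.inr x)) = Monoid.Coprod.inr x
        rw [cFwd, Monoid.Coprod.lift_apply_inr]
        show cBwd (Monoid.CoprodI.of (M := HB) (i := false) x) = _
        rw [cBwd, Monoid.CoprodI.lift_of])
    (by
      apply Monoid.CoprodI.ext_hom
      intro b
      cases b <;> refine MonoidHom.ext fun x => ?_
      · show cFwd (cBwd (Monoid.CoprodI.of x)) = Monoid.CoprodI.of x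
        rw [cBwd, Monoid.CoprodI.lift_of]
        show cFwd (Monoid.Coprod.inr x) = _
        rw [cFwd, Monoid.Coprod.lift_apply_inr]
        rfl
      · show cFwd (cBwd (Monoid.CoprodI.of x)) = Monoid.CoprodI.of x
        rw [cBwd, Monoid.CoprodI.lift_of]
        show cFwd (Monoid.Coprod.inl x) = _
        rw [cFwd, Monoid.Coprod.lift_apply_inl]
        rfl)

/-- PSL₂(ℤ) is isomorphic to the free product C₂ * C₃. -/
theorem psl2z_iso_free_product_C2_C3 :
    Nonempty (PSL2Z ≃* Monoid.Coprod (Multiplicative (ZMod 2)) (Multiplicative (ZMod 3))) := by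
  have hinj : Function.Injective (L.comp cEquiv.toMonoidHom) :=
    L_injective.comp cEquiv.injective
  have hsurj : Function.Surjective (L.comp cEquiv.toMonoidHom) :=
    L_surjective.comp cEquiv.surjective
  exact ⟨(MulEquiv.ofBijective _ ⟨hinj, hsurj⟩).symm⟩
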